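/- Let D ⊆ ℂ be a domain convex in the direction of the real axis and p : D → ℝ a continuous real-valued function. Then the map w ↦ w + p(w) is injective on D if and only if it is locally injective on D; and in this case the image of D under w ↦ w + p(w) is convex in the direction of the real axis. -/

import Mathlib

open Complex Set Metric

/-- Projection of a planar set onto the imaginary axis. -/
def Py (D : Set ℂ) : Set ℝ := {a : ℝ | ∃ z ∈ D, z.im = a}

/-- `Λ_y(D)`: imaginary parts `a` such that the horizontal slice of `D` at height `a`
is nonempty and connected. -/
def Ly (D : Set ℂ) : Set ℝ := {a : ℝ | IsConnected (D ∩ {z : ℂ | z.im = a})}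

/-- Convexity in the direction of the real axis. -/
def CvxRe (D : Set ℂ) : Prop :=
  ∀ z ∈ D, ∀ w ∈ D, z.im = w.im → segment ℝ z w ⊆ D

/-- Local injectivity of `q` on `S`. -/
def LocInjOn (q : ℂ → ℂ) (S : Set ℂ) : Prop :=
  ∀ z ∈ S, ∃ U ∈ nhdsWithin z S, Set.InjOn q U

/-- Core of the 1D lemma: if a continuous function on `[a,b]` has equal endpoint
values and exceeds that value somewhere, then there is an interior point near which
it is not injective. -/
private lemma css_core (f : ℝ → ℝ) {a b : ℝ} (hab : a < b)
    (hf : ContinuousOn f (Icc a b)) (hfab : f a = f b)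
    {x0 : ℝ} (hx0 : x0 ∈ Icc a b) (hlt : f a < f x0) :
    ∃ c ∈ Ioo a b, ∀ δ > 0, ∃ x ∈ Icc a b, ∃ y ∈ Icc a b,
      x ≠ y ∧ f x = f y ∧ |x - c| < δ ∧ |y - c| < δ := by
  obtain ⟨c0, hc0, hmax⟩ := isCompact_Icc.exists_isMaxOn (nonempty_Icc.2 hab.le) hf
  set M := f c0 with hM
  have hmax' : ∀ x ∈ Icc a b, f x ≤ M := hmax
  set K : Set ℝ := Icc a b ∩ f ⁻¹' {M} with hK
  have hKc : IsClosed K := hf.preimage_isClosed_of_isClosed isClosed_Icc isClosed_singleton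
  have hKne : K.Nonempty := ⟨c0, hc0, rfl⟩
  have hKbdd : BddAbove K := (bddAbove_Icc).mono inter_subset_left
  set c := sSup K with hc
  have hcK : c ∈ K := hKc.csSup_mem hKne hKbdd
  have hcI : c ∈ Icc a b := hcK.1
  have hfc : f c = M := hcK.2
  have hvM : f a < M := lt_of_lt_of_le hlt (hmax' x0 hx0)
  have hca : a < c := by
    rcases hcI.1.lt_or_eq with h | h
    · exact h
    · exfalso; rw [← h] at hfc; linarith
  have hcb : c < b := by
    rcases hcI.2.lt_or_eq with h | h
    · exact h
    · exfalso; rw [h] at hfc; rw [hfab] at hvM; linarith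
  refine ⟨c, ⟨hca, hcb⟩, ?_⟩
  intro δ hδ
  have hm1 : (0:ℝ) < min δ (min (c - a) (b - c)) :=
    lt_min hδ (lt_min (by linarith) (by linarith))
  set δ' := min δ (min (c - a) (b - c)) / 2 with hδ'
  have hδ'pos : 0 < δ' := by linarith
  have hδ'δ : δ' < δ := by
    have := min_le_left δ (min (c - a) (b - c)); linarith
  have hδ'a : δ' ≤ (c - a) / 2 := by
    have h1 := min_le_right δ (min (c - a) (b - c))
    have h2 := min_le_left (c - a) (b - c); linarith
  have hδ'b : δ' ≤ (b - c) / 2 := by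
    have h1 := min_le_right δ (min (c - a) (b - c))
    have h2 := min_le_right (c - a) (b - c); linarith
  have h1 : a ≤ c - δ' := by linarith
  have h2 : c + δ' ≤ b := by linarith
  by_cases hcase : f (c - δ') = M
  · refine ⟨c - δ', ⟨h1, by linarith⟩, c, hcI, (sub_lt_self c hδ'pos).ne, hcase.trans hfc.symm,
      ?_, by simpa using hδ⟩
    have he : c - δ' - c = -δ' := by ring
    rw [he, abs_neg, abs_of_pos hδ'pos]; exact hδ'δ
  · have hl' : f (c - δ') < M := lt_of_le_of_ne (hmax' _ ⟨h1, by linarith⟩) hcase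
    have hr' : f (c + δ') < M := by
      refine lt_of_le_of_ne (hmax' _ ⟨by linarith, h2⟩) ?_
      intro h
      have hmem : c + δ' ∈ K := ⟨⟨by linarith, h2⟩, h⟩
      have := le_csSup hKbdd hmem; linarith
    set t := max (f (c - δ')) (f (c + δ')) with htd
    have ht : t < M := max_lt hl' hr'
    obtain ⟨x, hxI, hfx⟩ := intermediate_value_Icc (by linarith : c - δ' ≤ c)
      (hf.mono (Icc_subset_Icc h1 hcI.2)) ⟨le_max_left _ _, by rw [hfc]; exact ht.le⟩
    obtain ⟨y, hyI, hfy⟩ := intermediate_value_Icc' (by linarith : c ≤ c + δ')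
      (hf.mono (Icc_subset_Icc hcI.1 h2)) ⟨le_max_right _ _, by rw [hfc]; exact ht.le⟩
    have hxc : x < c := lt_of_le_of_ne hxI.2 (by
      intro h; apply ht.ne; rw [htd, ← hfx, h, hfc])
    have hcy : c < y := lt_of_le_of_ne hyI.1 (by
      intro h; apply ht.ne; rw [htd, ← hfy, ← h, hfc])
    refine ⟨x, ⟨by linarith [hxI.1], by linarith⟩, y, ⟨by linarith, by linarith [hyI.2]⟩,
      (hxc.trans hcy).ne, hfx.trans hfy.symm, ?_, ?_⟩
    · rw [abs_lt]; constructor <;> [linarith [hxI.1]; linarith]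
    · rw [abs_lt]; constructor <;> [linarith; linarith [hyI.2]]

/-- The 1D lemma: a continuous function on `[a,b]` with `f a = f b` fails to be
injective near some interior point. -/
private lemma css_lem1 (f : ℝ → ℝ) {a b : ℝ} (hab : a < b)
    (hf : ContinuousOn f (Icc a b)) (hfab : f a = f b) :
    ∃ c ∈ Ioo a b, ∀ δ > 0, ∃ x ∈ Icc a b, ∃ y ∈ Icc a b,
      x ≠ y ∧ f x = f y ∧ |x - c| < δ ∧ |y - c| < δ := by
  by_cases h1 : ∃ x0 ∈ Icc a b, f a < f x0
  · obtain ⟨x0, hx0, hlt⟩ := h1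
    exact css_core f hab hf hfab hx0 hlt
  by_cases h2 : ∃ x0 ∈ Icc a b, f x0 < f a
  · obtain ⟨x0, hx0, hlt⟩ := h2
    obtain ⟨c, hc, H⟩ := css_core (fun x => -(f x)) hab hf.neg (by rw [hfab]) hx0
      (by simpa using hlt)
    refine ⟨c, hc, fun δ hδ => ?_⟩
    obtain ⟨x, hx, y, hy, hne, hfe, h3, h4⟩ := H δ hδ
    exact ⟨x, hx, y, hy, hne, neg_inj.1 hfe, h3, h4⟩
  · push_neg at h1 h2
    have hconst : ∀ x ∈ Icc a b, f x = f a := fun x hxm =>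
      le_antisymm (h1 x hxm) (h2 x hxm)
    refine ⟨(a + b) / 2, ⟨by linarith, by linarith⟩, fun δ hδ => ?_⟩
    have hbc : (0:ℝ) < b - (a + b) / 2 := by linarith
    have hmy : (0:ℝ) < min δ (b - (a + b) / 2) := lt_min hδ hbc
    have hmr := min_le_right δ (b - (a + b) / 2)
    have hml := min_le_left δ (b - (a + b) / 2)
    refine ⟨(a + b) / 2, ⟨by linarith, by linarith⟩,
      (a + b) / 2 + min δ (b - (a + b) / 2) / 2, ⟨by linarith, by linarith⟩,
      (lt_add_of_pos_right _ (by linarith)).ne, ?_, by simpa using hδ, ?_⟩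
    · rw [hconst ((a + b) / 2) ⟨by linarith, by linarith⟩,
        hconst ((a + b) / 2 + min δ (b - (a + b) / 2) / 2) ⟨by linarith, by linarith⟩]
    · have he : (a + b) / 2 + min δ (b - (a + b) / 2) / 2 - (a + b) / 2
          = min δ (b - (a + b) / 2) / 2 := by ring
      rw [he, abs_of_pos (by linarith)]; linarith

/-- Points of the horizontal segment between two points of equal imaginary part. -/
private lemma css_horiz {z w : ℂ} (him : z.im = w.im) {x : ℝ}
    (hx : x ∈ uIcc z.re w.re) : (x : ℂ) + (z.im : ℂ) * I ∈ segment ℝ z w := by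
  rw [← segment_eq_uIcc] at hx
  obtain ⟨s, t, hs, ht, hst, hxe⟩ := hx
  refine ⟨s, t, hs, ht, hst, ?_⟩
  simp only [smul_eq_mul] at hxe
  apply Complex.ext
  · simpa [Complex.real_smul] using hxe
  · simp only [Complex.add_im, Complex.real_smul, Complex.mul_im, Complex.ofReal_re,
      Complex.ofReal_im, Complex.mul_re, Complex.I_re, Complex.I_im]
    ring_nf
    linear_combination z.im * hst - t * him

private lemma css_sliceD {D : Set ℂ} (hx : CvxRe D) {z w : ℂ} (hz : z ∈ D) (hw : w ∈ D)
    (him : z.im = w.im) {x : ℝ} (hxm : x ∈ uIcc z.re w.re) :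
    (x : ℂ) + (z.im : ℂ) * I ∈ D :=
  hx z hz w hw him (css_horiz him hxm)

/-- Key step: local injectivity forbids two distinct points on a horizontal line
with the same image. -/
private lemma css_key {D : Set ℂ} (hx : CvxRe D) {p : ℂ → ℝ} (hp : ContinuousOn p D)
    (hl : LocInjOn (fun w => w + (p w : ℂ)) D) {z w : ℂ} (hz : z ∈ D) (hw : w ∈ D)
    (him : z.im = w.im) (hlt : z.re < w.re)
    (hq : z + (p z : ℂ) = w + (p w : ℂ)) : False := by
  have hre : z.re + p z = w.re + p w := by
    have := congrArg Complex.re hq; simpa using this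
  set f : ℝ → ℝ := fun x => x + p ((x : ℂ) + (z.im : ℂ) * I) with hfdef
  have huI : uIcc z.re w.re = Icc z.re w.re := uIcc_of_le hlt.le
  have hmem : ∀ x ∈ Icc z.re w.re, (x : ℂ) + (z.im : ℂ) * I ∈ D := fun x hxm =>
    css_sliceD hx hz hw him (by rw [huI]; exact hxm)
  have hw' : (w.re : ℂ) + (z.im : ℂ) * I = w := by rw [him]; exact Complex.re_add_im w
  have hfc : ContinuousOn f (Icc z.re w.re) := by
    apply continuousOn_id.add
    exact hp.comp (Complex.continuous_ofReal.add continuous_const).continuousOn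
      (fun x hxm => hmem x hxm)
  have hfab : f z.re = f w.re := by
    simp only [hfdef]
    rw [Complex.re_add_im, hw']
    exact hre
  obtain ⟨c, hcmem, H⟩ := css_lem1 f hlt hfc hfab
  have hζD : (c : ℂ) + (z.im : ℂ) * I ∈ D := hmem c (Ioo_subset_Icc_self hcmem)
  obtain ⟨U, hU, hinj⟩ := hl _ hζD
  rw [Metric.mem_nhdsWithin_iff] at hU
  obtain ⟨ε, hε, hsub⟩ := hU
  obtain ⟨x, hxm, y, hym, hne, hfe, hxc, hyc⟩ := H ε hε
  have hdx : dist ((x : ℂ) + (z.im : ℂ) * I) ((c : ℂ) + (z.im : ℂ) * I) = |x - c| := by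
    rw [Complex.dist_eq]
    have he : ((x : ℂ) + (z.im : ℂ) * I) - ((c : ℂ) + (z.im : ℂ) * I)
        = ((x - c : ℝ) : ℂ) := by push_cast; ring
    rw [he, Complex.norm_real, Real.norm_eq_abs]
  have hdy : dist ((y : ℂ) + (z.im : ℂ) * I) ((c : ℂ) + (z.im : ℂ) * I) = |y - c| := by
    rw [Complex.dist_eq]
    have he : ((y : ℂ) + (z.im : ℂ) * I) - ((c : ℂ) + (z.im : ℂ) * I)
        = ((y - c : ℝ) : ℂ) := by push_cast; ring
    rw [he, Complex.norm_real, Real.norm_eq_abs]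
  have hxU : (x : ℂ) + (z.im : ℂ) * I ∈ U :=
    hsub ⟨by rw [mem_ball, hdx]; exact hxc, hmem x hxm⟩
  have hyU : (y : ℂ) + (z.im : ℂ) * I ∈ U :=
    hsub ⟨by rw [mem_ball, hdy]; exact hyc, hmem y hym⟩
  have hfe' : x + p ((x : ℂ) + (z.im : ℂ) * I) = y + p ((y : ℂ) + (z.im : ℂ) * I) := hfe
  have hqeq : (fun w => w + (p w : ℂ)) ((x : ℂ) + (z.im : ℂ) * I)
      = (fun w => w + (p w : ℂ)) ((y : ℂ) + (z.im : ℂ) * I) := by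
    simp only
    apply Complex.ext
    · simpa using hfe'
    · simp
  have := hinj hxU hyU hqeq
  have hxy : x = y := by
    have := congrArg Complex.re this; simpa using this
  exact hne hxy

theorem clunie_sheil_small_lemma
    (D : Set ℂ) (ho : IsOpen D) (hc : IsConnected D) (hx : CvxRe D)
    (p : ℂ → ℝ) (hp : ContinuousOn p D) :
    (Set.InjOn (fun w => w + (p w : ℂ)) D ↔
      LocInjOn (fun w => w + (p w : ℂ)) D) ∧
    (Set.InjOn (fun w => w + (p w : ℂ)) D →
      CvxRe ((fun w => w + (p w : ℂ)) '' D)) := by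
  constructor
  · constructor
    · intro hinj z hz
      exact ⟨D, self_mem_nhdsWithin, hinj⟩
    · intro hl z hz w hw hq
      have him : z.im = w.im := by
        have := congrArg Complex.im hq; simpa using this
      rcases lt_trichotomy z.re w.re with h | h | h
      · exact (css_key hx hp hl hz hw him h hq).elim
      · exact Complex.ext h him
      · exact (css_key hx hp hl hw hz him.symm h hq.symm).elim
  · intro _ u' hu' v' hv' him' uu huu
    obtain ⟨z, hz, rfl⟩ := hu'
    obtain ⟨w, hw, rfl⟩ := hv'
    have him : z.im = w.im := by simpa using him'
    obtain ⟨s, t, hs, ht, hst, rfl⟩ := huu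
    set f : ℝ → ℝ := fun x => x + p ((x : ℂ) + (z.im : ℂ) * I) with hfdef
    have hw' : (w.re : ℂ) + (z.im : ℂ) * I = w := by rw [him]; exact Complex.re_add_im w
    have hmem : ∀ x ∈ uIcc z.re w.re, (x : ℂ) + (z.im : ℂ) * I ∈ D := fun x hxm =>
      css_sliceD hx hz hw him hxm
    have hfc : ContinuousOn f (uIcc z.re w.re) := by
      apply continuousOn_id.add
      exact hp.comp (Complex.continuous_ofReal.add continuous_const).continuousOn
        (fun x hxm => hmem x hxm)
    have hfz : f z.re = z.re + p z := by
      simp only [hfdef]; rw [Complex.re_add_im]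
    have hfw : f w.re = w.re + p w := by
      simp only [hfdef]; rw [hw']
    -- the real part of the target point lies between f z.re and f w.re
    have hmid : s * (z.re + p z) + t * (w.re + p w) ∈ uIcc (f z.re) (f w.re) := by
      rw [hfz, hfw, ← segment_eq_uIcc]
      exact ⟨s, t, hs, ht, hst, by simp [smul_eq_mul]⟩
    obtain ⟨x, hxm, hfx⟩ := intermediate_value_uIcc hfc hmid
    refine ⟨(x : ℂ) + (z.im : ℂ) * I, hmem x hxm, ?_⟩
    have hre2 : x + p ((x : ℂ) + (z.im : ℂ) * I) = s * (z.re + p z) + t * (w.re + p w) :=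
      hfx
    apply Complex.ext
    · simp only [Complex.add_re, Complex.real_smul, Complex.mul_re, Complex.ofReal_re,
        Complex.ofReal_im, Complex.I_re, Complex.I_im, Complex.add_im, Complex.mul_im]
      linear_combination hre2
    · simp only [Complex.add_im, Complex.real_smul, Complex.mul_im, Complex.ofReal_re,
        Complex.ofReal_im, Complex.mul_re, Complex.I_re, Complex.I_im, Complex.add_re]
      linear_combination (-z.im) * hst + t * him
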